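/- Let a be a discrete phase-type (PH) distribution on ℕ and let c be a probability distribution on ℕ belonging to F_alg (the distributions of independent ℕ-valued random variables X and Z), and suppose s = ∑ₙ a n · c n > 0. Then the conditional distribution of X given the event X = Z, namely n ↦ a n · c n / s, belongs to F_alg. -/

import Mathlib

open Matrix Filter

/-- `p` is a probability distribution on ℕ. -/
def IsProbDist (p : ℕ → ℝ) : Prop :=
  (∀ n, 0 ≤ p n) ∧ HasSum p 1

/-- `p` is a discrete phase-type (PH) distribution on ℕ. -/
def IsPH (p : ℕ → ℝ) : Prop :=
  IsProbDist p ∧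
  ∃ m : ℕ, 1 ≤ m ∧
    ∃ (α : Fin m → ℝ) (T : Matrix (Fin m) (Fin m) ℝ),
      (∀ i, 0 ≤ α i) ∧ (∑ i, α i) ≤ 1 ∧
      (∀ i j, 0 ≤ T i j) ∧ (∀ i, (∑ j, T i j) ≤ 1) ∧
      p 0 = 1 - ∑ i, α i ∧
      ∀ n, 1 ≤ n → p n = α ⬝ᵥ (T ^ (n - 1)).mulVec (fun i => 1 - ∑ j, T i j)

/-- One step of the SCFG fixed-point iteration: substitute the power series
`f W` for the variable `y_W` and `PowerSeries.X` for the variable `z`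
(`none` encodes `z`, `some W` encodes `y_W`). -/
noncomputable def grammarStep {V : Type} (P : V → MvPolynomial (Option V) ℝ)
    (f : V → PowerSeries ℝ) (W : V) : PowerSeries ℝ :=
  MvPolynomial.aeval (fun o : Option V => o.elim PowerSeries.X f) (P W)

/-- The SCFG fixed-point iteration starting from the zero tuple. -/
noncomputable def grammarIter {V : Type} (P : V → MvPolynomial (Option V) ℝ) :
    ℕ → V → PowerSeries ℝ
  | 0 => fun _ => 0
  | k + 1 => grammarStep P (grammarIter P k)

/-- `q` belongs to `F_alg`: `q` is a normalized ℝ₊-algebraic sequence, i.e. it is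
produced by a stochastic context-free grammar over a one-letter alphabet.  There
are a finite set `V` of nonterminals with start symbol `S` and polynomials `P W`
with nonnegative coefficients in the variables `(y_W)` and `z` such that the
fixed-point iteration from the zero tuple converges coefficientwise to a tuple
`f` of power series with nonnegative coefficients satisfying `f_V = P_V(f, z)`,
the coefficients of `f S` have finite positive sum `s`, and `q n = [zⁿ](f S)/s`. -/
def MemFalg (q : ℕ → ℝ) : Prop :=
  ∃ (V : Type) (_ : Fintype V) (S : V) (P : V → MvPolynomial (Option V) ℝ)
    (f : V → PowerSeries ℝ),
    (∀ W d, 0 ≤ MvPolynomial.coeff d (P W)) ∧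
    (∀ W (n : ℕ), Tendsto (fun k => PowerSeries.coeff (R := ℝ) n (grammarIter P k W))
      atTop (nhds (PowerSeries.coeff (R := ℝ) n (f W)))) ∧
    (∀ W, f W = grammarStep P f W) ∧
    (∀ W (n : ℕ), 0 ≤ PowerSeries.coeff (R := ℝ) n (f W)) ∧
    ∃ s : ℝ, HasSum (fun n => PowerSeries.coeff (R := ℝ) n (f S)) s ∧ 0 < s ∧
      ∀ n, q n = PowerSeries.coeff (R := ℝ) n (f S) / s


namespace PHF
variable {ι : Type} [Fintype ι] [DecidableEq ι]

/-- Hadamard transfer: `Had M g i j = ∑ n, gₙ (Mⁿ)ᵢⱼ zⁿ`. -/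
noncomputable def Had (M : Matrix ι ι ℝ) (g : PowerSeries ℝ) : Matrix ι ι (PowerSeries ℝ) :=
  Matrix.of fun i j => PowerSeries.mk fun n => PowerSeries.coeff (R := ℝ) n g * (M ^ n) i j

lemma coeff_Had (M : Matrix ι ι ℝ) (g : PowerSeries ℝ) (i j : ι) (n : ℕ) :
    PowerSeries.coeff (R := ℝ) n (Had M g i j) = PowerSeries.coeff (R := ℝ) n g * (M ^ n) i j := by
  simp [Had]

lemma Had_zero (M : Matrix ι ι ℝ) : Had M 0 = 0 := by
  ext i j n
  simp [coeff_Had]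

lemma Had_add (M : Matrix ι ι ℝ) (g h : PowerSeries ℝ) :
    Had M (g + h) = Had M g + Had M h := by
  ext i j n
  simp [coeff_Had, add_mul]

lemma Had_smul (M : Matrix ι ι ℝ) (r : ℝ) (g : PowerSeries ℝ) :
    Had M (r • g) = r • Had M g := by
  ext i j n
  simp [coeff_Had, mul_assoc]

lemma Had_one (M : Matrix ι ι ℝ) : Had M 1 = 1 := by
  ext i j n
  rw [coeff_Had]
  rcases eq_or_ne n 0 with rfl | hn
  · simp [Matrix.one_apply]
  · simp [PowerSeries.coeff_one, hn, Matrix.one_apply]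
    split <;> simp [PowerSeries.coeff_one, hn]

lemma Had_mul (M : Matrix ι ι ℝ) (g h : PowerSeries ℝ) :
    Had M (g * h) = Had M g * Had M h := by
  ext i j n
  rw [coeff_Had, Matrix.mul_apply, map_sum]
  simp only [PowerSeries.coeff_mul, coeff_Had]
  rw [Finset.sum_comm, Finset.sum_mul]
  refine Finset.sum_congr rfl fun p hp => ?_
  have hpn : p.1 + p.2 = n := Finset.HasAntidiagonal.mem_antidiagonal.mp hp
  rw [← hpn, pow_add, Matrix.mul_apply, Finset.mul_sum]
  exact Finset.sum_congr rfl fun x _ => by ring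


/-- `Had M` bundled as a ring homomorphism. -/
noncomputable def HadHom (M : Matrix ι ι ℝ) : PowerSeries ℝ →+* Matrix ι ι (PowerSeries ℝ) where
  toFun := Had M
  map_one' := Had_one M
  map_mul' := Had_mul M
  map_zero' := Had_zero M
  map_add' := Had_add M

lemma Had_pow (M : Matrix ι ι ℝ) (g : PowerSeries ℝ) (k : ℕ) :
    Had M (g ^ k) = Had M g ^ k := map_pow (HadHom M) g k

lemma Had_listprod (M : Matrix ι ι ℝ) (l : List (PowerSeries ℝ)) :
    Had M l.prod = (l.map (Had M)).prod := map_list_prod (HadHom M) l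

lemma Had_X (M : Matrix ι ι ℝ) :
    Had M PowerSeries.X = (PowerSeries.X : PowerSeries ℝ) • M.map (PowerSeries.C (R := ℝ)) := by
  ext i j n
  rw [coeff_Had, Matrix.smul_apply, Matrix.map_apply, smul_eq_mul,
    PowerSeries.coeff_mul_C, PowerSeries.coeff_X]
  rcases eq_or_ne n 1 with rfl | hn
  · simp
  · simp [hn]


lemma mapMatrix_smul' {R S : Type*} [CommSemiring R] [CommSemiring S] [Algebra ℝ R]
    [Algebra ℝ S] (f : R →ₐ[ℝ] S)
    (x : R) (N : Matrix ι ι R) : f.mapMatrix (x • N) = f x • f.mapMatrix N := by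
  ext i j
  simp [AlgHom.mapMatrix_apply, Matrix.map_apply, Matrix.smul_apply, smul_eq_mul]

variable {V : Type} [Fintype V]

/-- The matrix of variables associated to the nonterminal `W`. -/
noncomputable def Ymat (ι : Type) (W : V) :
    Matrix ι ι (MvPolynomial (Option (Option (V × ι × ι))) ℝ) :=
  Matrix.of fun i j => MvPolynomial.X (some (some (W, i, j)))

/-- Matrix image of the monomial `μ` under the Hadamard-transfer substitution. -/
noncomputable def Psi (M : Matrix ι ι ℝ) (μ : Option V →₀ ℕ) :
    Matrix ι ι (MvPolynomial (Option (Option (V × ι × ι))) ℝ) :=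
  ((MvPolynomial.X none : MvPolynomial (Option (Option (V × ι × ι))) ℝ) ^ μ none) •
      (M.map MvPolynomial.C) ^ μ none *
    ((Finset.univ.toList (α := V)).map fun W => Ymat ι W ^ μ (some W)).prod

/-- Matrix image of a polynomial under the Hadamard-transfer substitution. -/
noncomputable def Phi (M : Matrix ι ι ℝ) (p : MvPolynomial (Option V) ℝ) :
    Matrix ι ι (MvPolynomial (Option (Option (V × ι × ι))) ℝ) :=
  ∑ μ ∈ p.support, MvPolynomial.coeff μ p • Psi M μ

lemma aeval_Psi (M : Matrix ι ι ℝ) (A : Option (Option (V × ι × ι)) → PowerSeries ℝ)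
    (h : V → PowerSeries ℝ) (hA0 : A none = PowerSeries.X)
    (hA : ∀ W i j, A (some (some (W, i, j))) = Had M (h W) i j) (μ : Option V →₀ ℕ) :
    (MvPolynomial.aeval A).mapMatrix (Psi M μ) =
      Had M (μ.prod fun v k => (Option.elim v PowerSeries.X h) ^ k) := by
  have hY : ∀ W : V, (MvPolynomial.aeval A).mapMatrix (Ymat ι W) = Had M (h W) := by
    intro W; ext i j
    simp [RingHom.mapMatrix_apply, Matrix.map_apply, Ymat, hA]
  have hMC : (MvPolynomial.aeval A).mapMatrix (M.map MvPolynomial.C) =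
      M.map (PowerSeries.C (R := ℝ)) := by
    ext i j
    simp [RingHom.mapMatrix_apply, Matrix.map_apply, PowerSeries.algebraMap_apply]
  rw [Psi, _root_.map_mul, mapMatrix_smul']
  simp only [map_pow]
  rw [hMC, map_list_prod, List.map_map]
  rw [MvPolynomial.aeval_X, hA0]
  have hlist : List.map ((MvPolynomial.aeval A).mapMatrix ∘
      fun W => Ymat ι W ^ μ (some W)) Finset.univ.toList =
      List.map (fun W => Had M (h W) ^ μ (some W)) Finset.univ.toList := by
    refine List.map_congr_left fun W _ => ?_
    simp only [Function.comp_apply, map_pow, hY]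
  rw [hlist]
  -- now the right-hand side
  rw [Finsupp.prod_fintype _ _ (fun v => pow_zero _), Fintype.prod_option]
  simp only [Option.elim]
  rw [Had_mul, Had_pow, Had_X, ← Finset.prod_map_toList, Had_listprod, List.map_map, smul_pow]
  have hlist2 : List.map (Had M ∘ fun W => h W ^ μ (some W)) Finset.univ.toList =
      List.map (fun W => Had M (h W) ^ μ (some W)) Finset.univ.toList := by
    refine List.map_congr_left fun W _ => ?_
    simp only [Function.comp_apply, Had_pow]
  rw [hlist2]


lemma aeval_Phi (M : Matrix ι ι ℝ) (A : Option (Option (V × ι × ι)) → PowerSeries ℝ)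
    (h : V → PowerSeries ℝ) (hA0 : A none = PowerSeries.X)
    (hA : ∀ W i j, A (some (some (W, i, j))) = Had M (h W) i j)
    (p : MvPolynomial (Option V) ℝ) (i j : ι) :
    MvPolynomial.aeval A (Phi M p i j) =
      Had M (MvPolynomial.aeval (fun o : Option V => o.elim PowerSeries.X h) p) i j := by
  conv_rhs => rw [p.as_sum]
  rw [map_sum]
  have hHs : Had M (∑ μ ∈ p.support,
      MvPolynomial.aeval (fun o : Option V => o.elim PowerSeries.X h)
        (MvPolynomial.monomial μ (MvPolynomial.coeff μ p))) =
      ∑ μ ∈ p.support, Had M (MvPolynomial.aeval (fun o : Option V => o.elim PowerSeries.X h)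
        (MvPolynomial.monomial μ (MvPolynomial.coeff μ p))) := map_sum (HadHom M).toAddMonoidHom _ _
  rw [hHs, Matrix.sum_apply]
  rw [Phi, Matrix.sum_apply, map_sum]
  refine Finset.sum_congr rfl fun μ hμ => ?_
  rw [Matrix.smul_apply, _root_.map_smul, MvPolynomial.aeval_monomial]
  have := congrFun (congrFun (aeval_Psi M A h hA0 hA μ) i) j
  rw [AlgHom.mapMatrix_apply, Matrix.map_apply] at this
  rw [this]
  have : (algebraMap ℝ (PowerSeries ℝ)) (MvPolynomial.coeff μ p) *
      (μ.prod fun v k => (Option.elim v PowerSeries.X h) ^ k) =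
      MvPolynomial.coeff μ p • (μ.prod fun v k => (Option.elim v PowerSeries.X h) ^ k) :=
    (Algebra.smul_def _ _).symm
  rw [this, Had_smul, Matrix.smul_apply]


/-! ### Nonnegativity of coefficients -/

/-- All coefficients of `p` are nonnegative. -/
def NN {σ : Type*} (p : MvPolynomial σ ℝ) : Prop := ∀ d, 0 ≤ MvPolynomial.coeff d p

lemma NN.add {σ : Type*} {p q : MvPolynomial σ ℝ} (hp : NN p) (hq : NN q) : NN (p + q) :=
  fun d => by rw [MvPolynomial.coeff_add]; exact add_nonneg (hp d) (hq d)

lemma NN.mul {σ : Type*} [DecidableEq σ] {p q : MvPolynomial σ ℝ} (hp : NN p) (hq : NN q) : NN (p * q) := by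
  intro d
  rw [MvPolynomial.coeff_mul]
  exact Finset.sum_nonneg fun x _ => mul_nonneg (hp _) (hq _)

lemma NN_zero {σ : Type*} : NN (0 : MvPolynomial σ ℝ) := fun d => by simp

lemma NN_one {σ : Type*} [DecidableEq σ] : NN (1 : MvPolynomial σ ℝ) := fun d => by
  rw [MvPolynomial.coeff_one]
  split <;> norm_num

lemma NN_C {σ : Type*} [DecidableEq σ] {r : ℝ} (hr : 0 ≤ r) : NN (MvPolynomial.C r : MvPolynomial σ ℝ) :=
  fun d => by
    rw [MvPolynomial.coeff_C]
    split
    · exact hr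
    · exact le_rfl

lemma NN_X {σ : Type*} [DecidableEq σ] (v : σ) : NN (MvPolynomial.X v : MvPolynomial σ ℝ) := fun d => by
  rw [MvPolynomial.coeff_X']
  split <;> norm_num

lemma NN.pow {σ : Type*} [DecidableEq σ] {p : MvPolynomial σ ℝ} (hp : NN p) (k : ℕ) : NN (p ^ k) := by
  induction k with
  | zero => simpa using NN_one
  | succ k ih => rw [pow_succ]; exact ih.mul hp

lemma NN.smul {σ : Type*} {p : MvPolynomial σ ℝ} {r : ℝ} (hr : 0 ≤ r) (hp : NN p) :
    NN (r • p) := fun d => by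
  rw [MvPolynomial.coeff_smul]
  exact mul_nonneg hr (hp d)

lemma NN_sum {σ α : Type*} (s : Finset α) (f : α → MvPolynomial σ ℝ)
    (h : ∀ x ∈ s, NN (f x)) : NN (∑ x ∈ s, f x) := fun d => by
  rw [MvPolynomial.coeff_sum]
  exact Finset.sum_nonneg fun x hx => h x hx d

/-- Entrywise nonnegativity of a matrix of polynomials. -/
def NNmat {σ : Type*} (N : Matrix ι ι (MvPolynomial σ ℝ)) : Prop := ∀ i j, NN (N i j)

lemma NNmat.mul {σ : Type*} [DecidableEq σ] {N L : Matrix ι ι (MvPolynomial σ ℝ)} (hN : NNmat N)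
    (hL : NNmat L) : NNmat (N * L) := fun i j => by
  rw [Matrix.mul_apply]
  exact NN_sum _ _ fun x _ => (hN i x).mul (hL x j)

lemma NNmat_one {σ : Type*} [DecidableEq σ] : NNmat (1 : Matrix ι ι (MvPolynomial σ ℝ)) := fun i j => by
  rw [Matrix.one_apply]
  split <;> [exact NN_one; exact NN_zero]

lemma NNmat.pow {σ : Type*} [DecidableEq σ] {N : Matrix ι ι (MvPolynomial σ ℝ)} (hN : NNmat N) (k : ℕ) :
    NNmat (N ^ k) := by
  induction k with
  | zero => simpa using NNmat_one
  | succ k ih => rw [pow_succ]; exact ih.mul hN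

lemma NNmat_listprod {σ : Type*} [DecidableEq σ] (l : List (Matrix ι ι (MvPolynomial σ ℝ)))
    (h : ∀ N ∈ l, NNmat N) : NNmat l.prod := by
  induction l with
  | nil => simpa using NNmat_one
  | cons N l ih =>
      rw [List.prod_cons]
      exact (h N (List.mem_cons_self)).mul (ih fun L hL => h L (List.mem_cons_of_mem _ hL))

lemma NNmat_Psi [DecidableEq V] {M : Matrix ι ι ℝ} (hM : ∀ i j, 0 ≤ M i j) (μ : Option V →₀ ℕ) :
    NNmat (Psi M μ) := by
  refine NNmat.mul (fun i j => ?_) (NNmat_listprod _ ?_)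
  · rw [Matrix.smul_apply, smul_eq_mul]
    exact ((NN_X _).pow _).mul
      ((NNmat.pow (fun i' j' => by rw [Matrix.map_apply]; exact NN_C (hM i' j')) _) i j)
  · intro N hN
    obtain ⟨W, -, rfl⟩ := List.mem_map.mp hN
    exact NNmat.pow (fun i j => NN_X _) _

lemma NNmat_Phi [DecidableEq V] {M : Matrix ι ι ℝ} (hM : ∀ i j, 0 ≤ M i j) {p : MvPolynomial (Option V) ℝ}
    (hp : NN p) : NNmat (Phi M p) := fun i j => by
  rw [Phi, Matrix.sum_apply]
  refine NN_sum _ _ fun μ _ => ?_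
  rw [Matrix.smul_apply]
  exact NN.smul (hp μ) (NNmat_Psi hM μ i j)

/-! ### The product grammar -/

/-- The transformed grammar. -/
noncomputable def P2 (M : Matrix ι ι ℝ) (P : V → MvPolynomial (Option V) ℝ) (S : V)
    (e : ι) (τ : ι → ℝ) : Option (V × ι × ι) → MvPolynomial (Option (Option (V × ι × ι))) ℝ
  | none => ∑ j : ι, MvPolynomial.C (τ j) * MvPolynomial.X (some (some (S, e, j)))
  | some (W, i, j) => Phi M (P W) i j

/-- The transformed solution. -/
noncomputable def f2 (M : Matrix ι ι ℝ) (f : V → PowerSeries ℝ) (S : V) (e : ι) (τ : ι → ℝ) :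
    Option (V × ι × ι) → PowerSeries ℝ
  | none => ∑ j : ι, PowerSeries.C (R := ℝ) (τ j) * Had M (f S) e j
  | some (W, i, j) => Had M (f W) i j

lemma iter_P2_some (M : Matrix ι ι ℝ) (P : V → MvPolynomial (Option V) ℝ) (S : V)
    (e : ι) (τ : ι → ℝ) :
    ∀ k (W : V) (i j : ι), grammarIter (P2 M P S e τ) k (some (W, i, j)) =
      Had M (grammarIter P k W) i j := by
  intro k
  induction k with
  | zero => intro W i j; simp [grammarIter, Had_zero]
  | succ k ih =>
      intro W i j
      show grammarStep (P2 M P S e τ) (grammarIter (P2 M P S e τ) k) (some (W, i, j)) = _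
      rw [grammarStep, P2]
      exact aeval_Phi M _ (grammarIter P k) rfl (fun W i j => ih W i j) (P W) i j

lemma iter_P2_none (M : Matrix ι ι ℝ) (P : V → MvPolynomial (Option V) ℝ) (S : V)
    (e : ι) (τ : ι → ℝ) (k : ℕ) :
    grammarIter (P2 M P S e τ) (k + 1) none =
      ∑ j : ι, PowerSeries.C (R := ℝ) (τ j) * Had M (grammarIter P k S) e j := by
  show grammarStep (P2 M P S e τ) (grammarIter (P2 M P S e τ) k) none = _
  rw [grammarStep, P2, map_sum]
  refine Finset.sum_congr rfl fun j _ => ?_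
  rw [_root_.map_mul, MvPolynomial.aeval_C, MvPolynomial.aeval_X]
  show (algebraMap ℝ (PowerSeries ℝ)) (τ j) * grammarIter (P2 M P S e τ) k (some (S, e, j)) = _
  rw [iter_P2_some, PowerSeries.algebraMap_apply]
  simp

lemma fix_P2 (M : Matrix ι ι ℝ) (P : V → MvPolynomial (Option V) ℝ) (S : V)
    (e : ι) (τ : ι → ℝ) (f : V → PowerSeries ℝ) (hfix : ∀ W, f W = grammarStep P f W) :
    ∀ w, f2 M f S e τ w = grammarStep (P2 M P S e τ) (f2 M f S e τ) w := by
  have hsome : ∀ (W : V) (i j : ι), (f2 M f S e τ) (some (W, i, j)) = Had M (f W) i j :=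
    fun W i j => rfl
  rintro (_ | ⟨W, i, j⟩)
  · show _ = grammarStep _ _ none
    rw [grammarStep, P2, map_sum]
    show (f2 M f S e τ) none = _
    rw [f2]
    refine Finset.sum_congr rfl fun j _ => ?_
    rw [_root_.map_mul, MvPolynomial.aeval_C, MvPolynomial.aeval_X]
    show _ = (algebraMap ℝ (PowerSeries ℝ)) (τ j) * (f2 M f S e τ) (some (S, e, j))
    rw [hsome, PowerSeries.algebraMap_apply]
    simp
  · show Had M (f W) i j = grammarStep _ _ (some (W, i, j))
    rw [grammarStep, P2]
    rw [aeval_Phi M _ f rfl hsome (P W) i j, ← grammarStep, ← hfix]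


/-! ### The PH weighted automaton matrix -/

/-- Augmented substochastic matrix for a PH distribution: an extra initial state `none`. -/
def Mph {m : ℕ} (α : Fin m → ℝ) (T : Matrix (Fin m) (Fin m) ℝ) :
    Matrix (Option (Fin m)) (Option (Fin m)) ℝ :=
  Matrix.of fun i j => Option.elim j 0 fun j' => Option.elim i (α j') fun i' => T i' j'

/-- Exit weights for the augmented automaton. -/
def tauph {m : ℕ} (α : Fin m → ℝ) (T : Matrix (Fin m) (Fin m) ℝ) : Option (Fin m) → ℝ :=
  fun x => Option.elim x (1 - ∑ i, α i) fun i => 1 - ∑ j, T i j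

variable {m : ℕ} (α : Fin m → ℝ) (T : Matrix (Fin m) (Fin m) ℝ)

lemma Mph_apply_none (x : Option (Fin m)) : Mph α T x none = 0 := rfl

lemma Mph_nonneg (hα : ∀ i, 0 ≤ α i) (hT : ∀ i j, 0 ≤ T i j) :
    ∀ i j, 0 ≤ Mph α T i j := by
  rintro (_ | i) (_ | j) <;> first
    | exact le_rfl
    | exact hα j
    | exact hT i j

lemma Mph_pow_nonneg (hα : ∀ i, 0 ≤ α i) (hT : ∀ i j, 0 ≤ T i j) (k : ℕ) :
    ∀ i j, 0 ≤ (Mph α T ^ k) i j := by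
  induction k with
  | zero =>
      intro i j
      rw [pow_zero, Matrix.one_apply]
      split <;> norm_num
  | succ k ih =>
      intro i j
      rw [pow_succ, Matrix.mul_apply]
      exact Finset.sum_nonneg fun x _ => mul_nonneg (ih i x) (Mph_nonneg α T hα hT x j)

lemma Mph_pow_some_none (k : ℕ) (i : Fin m) : (Mph α T ^ k) (some i) none = 0 := by
  induction k with
  | zero => rw [pow_zero]; exact Matrix.one_apply_ne (by simp)
  | succ k _ =>
      rw [pow_succ, Matrix.mul_apply]
      exact Finset.sum_eq_zero fun y _ => by rw [Mph_apply_none, mul_zero]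

lemma Mph_pow_some_some (k : ℕ) : ∀ i j : Fin m,
    (Mph α T ^ k) (some i) (some j) = (T ^ k) i j := by
  induction k with
  | zero =>
      intro i j
      rw [pow_zero, pow_zero, Matrix.one_apply, Matrix.one_apply]
      by_cases h : i = j <;> simp [h]
  | succ k ih =>
      intro i j
      rw [pow_succ, pow_succ, Matrix.mul_apply, Matrix.mul_apply, Fintype.sum_option]
      rw [Mph_pow_some_none, zero_mul, zero_add]
      refine Finset.sum_congr rfl fun l _ => ?_
      rw [ih i l]
      rfl

lemma Mph_pow_none_some (k : ℕ) (j : Fin m) :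
    (Mph α T ^ (k + 1)) none (some j) = ∑ i, α i * (T ^ k) i j := by
  rw [pow_succ', Matrix.mul_apply, Fintype.sum_option]
  rw [Mph_apply_none, zero_mul, zero_add]
  exact Finset.sum_congr rfl fun i _ => by rw [Mph_pow_some_some]; rfl

lemma Mph_pow_none_none (k : ℕ) : (Mph α T ^ (k + 1)) none none = 0 := by
  rw [pow_succ, Matrix.mul_apply]
  exact Finset.sum_eq_zero fun y _ => by rw [Mph_apply_none, mul_zero]

lemma tau_dot_Mph_pow_succ (k : ℕ) :
    ∑ x : Option (Fin m), tauph α T x * (Mph α T ^ (k + 1)) none x =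
      α ⬝ᵥ (T ^ k).mulVec fun i => 1 - ∑ j, T i j := by
  rw [Fintype.sum_option, Mph_pow_none_none, mul_zero, zero_add]
  simp only [Mph_pow_none_some]
  rw [dotProduct]
  simp only [Matrix.mulVec, dotProduct, tauph, Option.elim]
  simp only [Finset.mul_sum]
  rw [Finset.sum_comm]
  exact Finset.sum_congr rfl fun i _ => Finset.sum_congr rfl fun j _ => by ring

lemma tau_dot_Mph_pow_zero :
    ∑ x : Option (Fin m), tauph α T x * (Mph α T ^ 0) none x = 1 - ∑ i, α i := by
  rw [Fintype.sum_option, pow_zero, Matrix.one_apply_eq]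
  have : ∀ i : Fin m, (1 : Matrix (Option (Fin m)) (Option (Fin m)) ℝ) none (some i) = 0 :=
    fun i => Matrix.one_apply_ne (by simp)
  simp [this, tauph]

end PHF


/-- If `X, Z` are independent ℕ-valued random variables, `X` with a PH
distribution `a` and `Z` with a distribution `c ∈ F_alg`, then the conditional
distribution of `X` given `X = Z`, namely `n ↦ a n · c n / s` with
`s = ∑ₙ a n · c n > 0`, belongs to `F_alg`. -/
theorem ph_falg_hadamard_conditioned_mem_falg (a c : ℕ → ℝ) (s : ℝ)
    (ha : IsPH a) (hc : IsProbDist c) (hcalg : MemFalg c)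
    (hs : HasSum (fun n => a n * c n) s) (hspos : 0 < s) :
    MemFalg (fun n => a n * c n / s) := by
  obtain ⟨⟨hann, hasum⟩, m, hm, α, T, hα, hαsum, hT, hTrow, ha0, haform⟩ := ha
  obtain ⟨V, hV, S, P, f, hPnn, htend, hfixf, hfnn, sc, hsc, hscpos, hcf⟩ := hcalg
  letI := hV
  letI : DecidableEq V := Classical.decEq V
  have hMnn : ∀ i j, 0 ≤ PHF.Mph α T i j := PHF.Mph_nonneg α T hα hT
  have hMpnn := PHF.Mph_pow_nonneg α T hα hT
  have hτnn : ∀ x, 0 ≤ PHF.tauph α T x := by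
    rintro (_ | i)
    · exact sub_nonneg.mpr hαsum
    · exact sub_nonneg.mpr (hTrow i)
  have hkey : ∀ n, ∑ x : Option (Fin m),
      PHF.tauph α T x * (PHF.Mph α T ^ n) none x = a n := by
    intro n
    cases n with
    | zero => rw [PHF.tau_dot_Mph_pow_zero, ← ha0]
    | succ k =>
        rw [PHF.tau_dot_Mph_pow_succ, haform (k + 1) (Nat.succ_le_succ (Nat.zero_le k))]
        simp
  have hfs : ∀ n, PowerSeries.coeff (R := ℝ) n (f S) = c n * sc := by
    intro n
    rw [hcf n]
    field_simp
  have hcoefstart : ∀ n, PowerSeries.coeff (R := ℝ) n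
      (PHF.f2 (PHF.Mph α T) f S none (PHF.tauph α T) none) =
      a n * PowerSeries.coeff (R := ℝ) n (f S) := by
    intro n
    show PowerSeries.coeff (R := ℝ) n (∑ j, PowerSeries.C (R := ℝ) (PHF.tauph α T j) *
      PHF.Had (PHF.Mph α T) (f S) none j) = _
    rw [map_sum]
    simp only [PowerSeries.coeff_C_mul, PHF.coeff_Had]
    rw [← hkey n, Finset.sum_mul]
    exact Finset.sum_congr rfl fun x _ => by ring
  refine ⟨Option (V × Option (Fin m) × Option (Fin m)), inferInstance, none,
    PHF.P2 (PHF.Mph α T) P S none (PHF.tauph α T),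
    PHF.f2 (PHF.Mph α T) f S none (PHF.tauph α T), ?_, ?_, ?_, ?_,
    s * sc, ?_, mul_pos hspos hscpos, ?_⟩
  · rintro (_ | ⟨W, i, j⟩) d
    · exact PHF.NN_sum _ _ (fun x _ => (PHF.NN_C (hτnn x)).mul (PHF.NN_X _)) d
    · exact PHF.NNmat_Phi hMnn (fun d' => hPnn W d') i j d
  · rintro (_ | ⟨W, i, j⟩) n
    · rw [← Filter.tendsto_add_atTop_iff_nat 1]
      simp only [PHF.iter_P2_none, map_sum, PowerSeries.coeff_C_mul, PHF.coeff_Had]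
      have hgoal : PowerSeries.coeff (R := ℝ) n
          (PHF.f2 (PHF.Mph α T) f S none (PHF.tauph α T) none) =
          ∑ x : Option (Fin m), PHF.tauph α T x *
            (PowerSeries.coeff (R := ℝ) n (f S) * (PHF.Mph α T ^ n) none x) := by
        show PowerSeries.coeff (R := ℝ) n (∑ j, PowerSeries.C (R := ℝ) (PHF.tauph α T j) *
          PHF.Had (PHF.Mph α T) (f S) none j) = _
        rw [map_sum]
        simp only [PowerSeries.coeff_C_mul, PHF.coeff_Had]
      rw [hgoal]
      exact tendsto_finset_sum _ fun x _ => ((htend S n).mul_const _).const_mul _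
    · simp only [PHF.iter_P2_some, PHF.coeff_Had]
      have hgoal : PowerSeries.coeff (R := ℝ) n
          (PHF.f2 (PHF.Mph α T) f S none (PHF.tauph α T) (some (W, i, j))) =
          PowerSeries.coeff (R := ℝ) n (f W) * (PHF.Mph α T ^ n) i j := PHF.coeff_Had _ _ _ _ _
      rw [hgoal]
      exact (htend W n).mul_const _
  · exact fun w => PHF.fix_P2 (PHF.Mph α T) P S none (PHF.tauph α T) f hfixf w
  · rintro (_ | ⟨W, i, j⟩) n
    · rw [hcoefstart]
      exact mul_nonneg (hann n) (hfnn S n)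
    · rw [show PHF.f2 (PHF.Mph α T) f S none (PHF.tauph α T) (some (W, i, j)) =
        PHF.Had (PHF.Mph α T) (f W) i j from rfl, PHF.coeff_Had]
      exact mul_nonneg (hfnn W n) (hMpnn n i j)
  · have heq : (fun n => PowerSeries.coeff (R := ℝ) n
        (PHF.f2 (PHF.Mph α T) f S none (PHF.tauph α T) none)) =
        fun n => a n * c n * sc := by
      funext n
      rw [hcoefstart, hfs]
      ring
    rw [heq]
    exact hs.mul_right sc
  · intro n
    rw [hcoefstart, hfs]
    rw [show a n * (c n * sc) = a n * c n * sc by ring,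
      mul_div_mul_right _ _ (ne_of_gt hscpos)]
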